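/- Let $\theta \in C^2[0,1]$ be a positive solution of $\mu\theta'' + \theta(m(x) - \theta) = 0$ on $(0,1)$ with $\theta'(0) = \theta'(1) = 0$, where $\mu > 0$ and $m$ is continuous and non-decreasing on $[0,1]$ with $m(0) < \theta(0)$. If $\theta$ is non-constant and $\min_{[0,1]}\max(m,0) < \theta < \max_{[0,1]} m$ on $[0,1]$, then $\theta'(x) > 0$ for all $x \in (0,1)$. -/

import Mathlib

open Set

set_option maxHeartbeats 2000000

/-- For the Neumann logistic steady state with non-decreasing resource `m`,
the solution `θ` is strictly increasing on `(0,1)`. -/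
theorem theta_increasing_of_monotone_m (μ : ℝ) (hμ : 0 < μ) (m θ : ℝ → ℝ)
    (hm : ContinuousOn m (Icc 0 1)) (hmono : MonotoneOn m (Icc 0 1))
    (hθreg : ContDiffOn ℝ 2 θ (Icc 0 1))
    (hθpos : ∀ x ∈ Icc (0:ℝ) 1, 0 < θ x)
    (hode : ∀ x ∈ Ioo (0:ℝ) 1,
      μ * derivWithin (derivWithin θ (Icc 0 1)) (Icc 0 1) x + θ x * (m x - θ x) = 0)
    (hbc0 : derivWithin θ (Icc 0 1) 0 = 0) (hbc1 : derivWithin θ (Icc 0 1) 1 = 0)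
    (hm0 : m 0 < θ 0)
    (hnonconst : ∃ x ∈ Icc (0:ℝ) 1, ∃ y ∈ Icc (0:ℝ) 1, θ x ≠ θ y)
    (hbounds : ∀ x ∈ Icc (0:ℝ) 1,
      sInf ((fun y => max (m y) 0) '' Icc (0:ℝ) 1) < θ x ∧ θ x < sSup (m '' Icc (0:ℝ) 1)) :
    ∀ x ∈ Ioo (0:ℝ) 1, 0 < derivWithin θ (Icc 0 1) x := by
  have hUD : UniqueDiffOn ℝ (Icc (0:ℝ) 1) := uniqueDiffOn_Icc zero_lt_one
  set θ' := derivWithin θ (Icc (0:ℝ) 1) with hθ'def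
  set θ'' := derivWithin θ' (Icc (0:ℝ) 1) with hθ''def
  have h0I : (0:ℝ) ∈ Icc (0:ℝ) 1 := by norm_num
  have h1I : (1:ℝ) ∈ Icc (0:ℝ) 1 := by norm_num
  have hθc : ContinuousOn θ (Icc 0 1) := hθreg.continuousOn
  have hθ'reg : ContDiffOn ℝ 1 θ' (Icc 0 1) := hθreg.derivWithin hUD (by norm_num)
  have hθ'c : ContinuousOn θ' (Icc 0 1) := hθ'reg.continuousOn
  have hθ''c : ContinuousOn θ'' (Icc 0 1) := hθ'reg.continuousOn_derivWithin hUD (le_refl 1)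
  have hθdiff : DifferentiableOn ℝ θ (Icc 0 1) := hθreg.differentiableOn (by norm_num)
  have hθ'diff : DifferentiableOn ℝ θ' (Icc 0 1) := hθ'reg.differentiableOn one_ne_zero
  have hdθ : ∀ x ∈ Ioo (0:ℝ) 1, HasDerivAt θ (θ' x) x := fun x hx =>
    ((hθdiff x (Ioo_subset_Icc_self hx)).hasDerivWithinAt).hasDerivAt
      (Icc_mem_nhds hx.1 hx.2)
  have hdθ' : ∀ x ∈ Ioo (0:ℝ) 1, HasDerivAt θ' (θ'' x) x := fun x hx =>
    ((hθ'diff x (Ioo_subset_Icc_self hx)).hasDerivWithinAt).hasDerivAt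
      (Icc_mem_nhds hx.1 hx.2)
  -- ODE extends to the closed interval
  have hodeIcc : ∀ x ∈ Icc (0:ℝ) 1, μ * θ'' x + θ x * (m x - θ x) = 0 := by
    intro x hx
    have hFc : ContinuousOn (fun x => μ * θ'' x + θ x * (m x - θ x)) (Icc 0 1) :=
      (continuousOn_const.mul hθ''c).add (hθc.mul (hm.sub hθc))
    have hxcl : x ∈ closure (Ioo (0:ℝ) 1) := by
      rwa [closure_Ioo (by norm_num : (0:ℝ) ≠ 1)]
    have hne : (nhdsWithin x (Ioo (0:ℝ) 1)).NeBot :=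
      mem_closure_iff_nhdsWithin_neBot.mp hxcl
    have h1 : Filter.Tendsto (fun x => μ * θ'' x + θ x * (m x - θ x))
        (nhdsWithin x (Ioo (0:ℝ) 1)) (nhds (μ * θ'' x + θ x * (m x - θ x))) :=
      ((hFc x hx).mono Ioo_subset_Icc_self)
    have h2 : Filter.Tendsto (fun x => μ * θ'' x + θ x * (m x - θ x))
        (nhdsWithin x (Ioo (0:ℝ) 1)) (nhds 0) := by
      apply Filter.Tendsto.congr' _ tendsto_const_nhds
      filter_upwards [eventually_mem_nhdsWithin] with y hy
      exact (hode y hy).symm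
    exact tendsto_nhds_unique h1 h2
  have hθ''eq : ∀ x ∈ Icc (0:ℝ) 1, θ'' x = θ x * (θ x - m x) / μ := by
    intro x hx
    have := hodeIcc x hx
    field_simp
    nlinarith [this]
  -- M and its properties
  set M := sSup (m '' Icc (0:ℝ) 1) with hMdef
  have hMeq : M = m 1 := by
    apply IsGreatest.csSup_eq
    constructor
    · exact ⟨1, h1I, rfl⟩
    · rintro y ⟨t, ht, rfl⟩
      exact hmono ht h1I ht.2
  have hθltM : ∀ x ∈ Icc (0:ℝ) 1, θ x < M := fun x hx => (hbounds x hx).2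
  have hMpos : 0 < M := lt_trans (hθpos 0 h0I) (hθltM 0 h0I)
  set L := M / μ with hLdef
  have hL : 0 ≤ L := (div_pos hMpos hμ).le
  -- θ'' 0 > 0
  have hθ''0 : 0 < θ'' 0 := by
    rw [hθ''eq 0 h0I]
    have h1 := hθpos 0 h0I
    have h2 : 0 < θ 0 - m 0 := by linarith
    positivity
  -- a small δ where θ' > 0 on (0, δ]
  obtain ⟨ε, hε, hball⟩ : ∃ ε > 0, Metric.ball (0:ℝ) ε ∩ Icc 0 1 ⊆ θ'' ⁻¹' (Ioi 0) := by
    have h : θ'' ⁻¹' (Ioi 0) ∈ nhdsWithin 0 (Icc (0:ℝ) 1) :=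
      (hθ''c 0 h0I) (Ioi_mem_nhds hθ''0)
    rwa [Metric.mem_nhdsWithin_iff] at h
  set δ : ℝ := min (ε/2) (1/2) with hδdef
  have hδpos : 0 < δ := by positivity
  have hδlt1 : δ < 1 := lt_of_le_of_lt (min_le_right _ _) (by norm_num)
  have hθ''posδ : ∀ x ∈ Icc (0:ℝ) δ, 0 < θ'' x := by
    intro x hx
    have hx1 : x ∈ Icc (0:ℝ) 1 := ⟨hx.1, le_trans hx.2 hδlt1.le⟩
    apply hball
    refine ⟨?_, hx1⟩
    rw [Metric.mem_ball, Real.dist_eq, sub_zero, abs_of_nonneg hx.1]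
    calc x ≤ δ := hx.2
    _ ≤ ε/2 := min_le_left _ _
    _ < ε := by linarith
  have hθ'posδ : ∀ x ∈ Ioc (0:ℝ) δ, 0 < θ' x := by
    have hsm : StrictMonoOn θ' (Icc (0:ℝ) δ) := by
      apply strictMonoOn_of_deriv_pos (convex_Icc _ _)
      · exact hθ'c.mono (Icc_subset_Icc le_rfl hδlt1.le)
      · intro x hx
        rw [interior_Icc] at hx
        have hxI : x ∈ Ioo (0:ℝ) 1 := ⟨hx.1, lt_trans hx.2 hδlt1⟩
        rw [(hdθ' x hxI).deriv]
        exact hθ''posδ x (Ioo_subset_Icc_self hx)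
    intro x hx
    have := hsm (left_mem_Icc.mpr hδpos.le) ⟨hx.1.le, hx.2⟩ hx.1
    rwa [hbc0] at this
  -- suppose the conclusion fails
  by_contra hcon
  push_neg at hcon
  obtain ⟨z, hz, hθ'z⟩ := hcon
  have hδz : δ < z := by
    by_contra hc
    push_neg at hc
    exact absurd (hθ'posδ z ⟨hz.1, hc⟩) (not_lt.mpr hθ'z)
  set S : Set ℝ := {x | x ∈ Icc δ z ∧ θ' x ≤ 0} with hSdef
  have hSne : S.Nonempty := ⟨z, ⟨hδz.le, le_rfl⟩, hθ'z⟩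
  have hSbdd : BddBelow S := ⟨δ, fun x hx => hx.1.1⟩
  set x₁ : ℝ := sInf S with hx₁def
  have hx₁mem : δ ≤ x₁ := le_csInf hSne (fun x hx => hx.1.1)
  have hx₁le : x₁ ≤ z := csInf_le hSbdd ⟨⟨hδz.le, le_rfl⟩, hθ'z⟩
  have hx₁Ioo : x₁ ∈ Ioo (0:ℝ) 1 := ⟨lt_of_lt_of_le hδpos hx₁mem, lt_of_le_of_lt hx₁le hz.2⟩
  have hx₁I : x₁ ∈ Icc (0:ℝ) 1 := Ioo_subset_Icc_self hx₁Ioo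
  -- θ' x₁ ≤ 0
  have hθ'x₁le : θ' x₁ ≤ 0 := by
    by_contra hc
    push_neg at hc
    obtain ⟨ε', hε', hball'⟩ : ∃ ε' > 0, Metric.ball x₁ ε' ∩ Icc 0 1 ⊆ θ' ⁻¹' (Ioi 0) := by
      have h : θ' ⁻¹' (Ioi 0) ∈ nhdsWithin x₁ (Icc (0:ℝ) 1) :=
        (hθ'c x₁ hx₁I) (Ioi_mem_nhds hc)
      rwa [Metric.mem_nhdsWithin_iff] at h
    obtain ⟨s, hsS, hslt⟩ := Real.lt_sInf_add_pos hSne hε'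
    have hsI : s ∈ Icc (0:ℝ) 1 :=
      ⟨le_trans hδpos.le hsS.1.1, le_trans hsS.1.2 hz.2.le⟩
    have : θ' s > 0 := by
      apply hball'
      refine ⟨?_, hsI⟩
      rw [Metric.mem_ball, Real.dist_eq,
        abs_of_nonneg (by linarith [csInf_le hSbdd hsS] : (0:ℝ) ≤ s - x₁)]
      linarith
    exact absurd this (not_lt.mpr hsS.2)
  -- θ' > 0 on (0, x₁)
  have hθ'pos : ∀ x ∈ Ioo (0:ℝ) x₁, 0 < θ' x := by
    intro x hx
    rcases le_or_gt x δ with h | h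
    · exact hθ'posδ x ⟨hx.1, h⟩
    · by_contra hc
      push_neg at hc
      have : x₁ ≤ x := csInf_le hSbdd ⟨⟨h.le, le_trans hx.2.le hx₁le⟩, hc⟩
      exact absurd hx.2 (not_lt.mpr this)
  -- θ' x₁ = 0
  have hneB : (nhdsWithin x₁ (Ioo (0:ℝ) x₁)).NeBot := by
    apply mem_closure_iff_nhdsWithin_neBot.mp
    rw [closure_Ioo (ne_of_lt hx₁Ioo.1)]
    exact ⟨hx₁Ioo.1.le, le_rfl⟩
  have hθ'x₁ : θ' x₁ = 0 := by
    have htd : Filter.Tendsto θ' (nhdsWithin x₁ (Ioo (0:ℝ) x₁)) (nhds (θ' x₁)) :=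
      (hθ'c x₁ hx₁I).mono (fun y hy => ⟨hy.1.le, le_trans hy.2.le hx₁I.2⟩)
    have hge : 0 ≤ θ' x₁ := by
      apply ge_of_tendsto htd
      filter_upwards [eventually_mem_nhdsWithin] with y hy
      exact (hθ'pos y hy).le
    linarith
  -- θ'' x₁ ≤ 0
  have hθ''x₁ : θ'' x₁ ≤ 0 := by
    have hd := (hdθ' x₁ hx₁Ioo)
    rw [hasDerivAt_iff_tendsto_slope] at hd
    have hd2 : Filter.Tendsto (slope θ' x₁) (nhdsWithin x₁ (Ioo (0:ℝ) x₁)) (nhds (θ'' x₁)) :=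
      hd.mono_left (nhdsWithin_mono _ (fun y hy => ne_of_lt hy.2))
    apply le_of_tendsto hd2
    filter_upwards [eventually_mem_nhdsWithin] with y hy
    rw [slope_def_field]
    apply div_nonpos_of_nonneg_of_nonpos
    · rw [hθ'x₁, sub_zero]; exact (hθ'pos y hy).le
    · linarith [hy.2]
  -- θ x₁ ≤ m x₁
  have hθmx₁ : θ x₁ ≤ m x₁ := by
    have h1 := hθ''eq x₁ hx₁I
    have h2 := hθpos x₁ hx₁I
    rw [h1] at hθ''x₁
    by_contra hcm
    push_neg at hcm
    have : 0 < θ x₁ * (θ x₁ - m x₁) / μ := div_pos (mul_pos h2 (by linarith)) hμ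
    linarith
  -- Grönwall argument: θ ≤ m x₁ on [x₁, 1]
  set c := m x₁ with hcdef
  have hsub : Icc x₁ 1 ⊆ Icc (0:ℝ) 1 := Icc_subset_Icc hx₁I.1 le_rfl
  have hsubo : Ioo x₁ 1 ⊆ Ioo (0:ℝ) 1 := Ioo_subset_Ioo hx₁I.1 le_rfl
  have hx₁1 : x₁ ≤ 1 := hx₁Ioo.2.le
  have hx₁mem1 : x₁ ∈ Icc x₁ 1 := left_mem_Icc.mpr hx₁1
  have hcge : ∀ x ∈ Icc x₁ 1, c ≤ m x := fun x hx => hmono hx₁I (hsub hx) hx.1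
  have hθlec : ∀ x ∈ Icc x₁ 1, θ x ≤ c := by
    set u : ℝ → ℝ := fun t => max (θ t - c) 0 with hudef
    have hucont : ContinuousOn u (Icc 0 1) := fun x hx =>
      ((hθc x hx).sub continuousWithinAt_const).max continuousWithinAt_const
    have hu_nonneg : ∀ t, 0 ≤ u t := fun t => le_max_right _ _
    set G : ℝ → ℝ := fun x => ∫ t in x₁..x, u t with hGdef
    have huint : ∀ a b, a ∈ Icc x₁ 1 → b ∈ Icc x₁ 1 →
        IntervalIntegrable u MeasureTheory.volume a b :=
      fun a b ha hb => (hucont.mono ((uIcc_subset_Icc ha hb).trans hsub)).intervalIntegrable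
    have hGcont : ContinuousOn G (Icc x₁ 1) := by
      rw [← uIcc_of_le hx₁1]
      exact intervalIntegral.continuousOn_primitive_interval
        (by rw [uIcc_of_le hx₁1]; exact (hucont.mono hsub).integrableOn_Icc)
    have hGd : ∀ x ∈ Ioo x₁ 1, HasDerivAt G (u x) x := by
      intro x hx
      have hxI : x ∈ Ioo (0:ℝ) 1 := hsubo hx
      have hca : ContinuousAt u x := (hucont.continuousAt (Icc_mem_nhds hxI.1 hxI.2))
      exact intervalIntegral.integral_hasDerivAt_right
        (huint x₁ x hx₁mem1 (Ioo_subset_Icc_self hx))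
        (ContinuousAt.stronglyMeasurableAtFilter isOpen_Ioo
          (fun y hy => hucont.continuousAt (Icc_mem_nhds hy.1 hy.2)) x hxI)
        hca
    have hGnonneg : ∀ x ∈ Icc x₁ 1, 0 ≤ G x := fun x hx =>
      intervalIntegral.integral_nonneg hx.1 (fun t _ => hu_nonneg t)
    have hGmono : MonotoneOn G (Icc x₁ 1) := by
      apply monotoneOn_of_deriv_nonneg (convex_Icc _ _) hGcont
      · intro x hx
        rw [interior_Icc] at hx
        exact (hGd x hx).differentiableAt.differentiableWithinAt
      · intro x hx
        rw [interior_Icc] at hx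
        rw [(hGd x hx).deriv]
        exact hu_nonneg x
    have hGx₁ : G x₁ = 0 := intervalIntegral.integral_same
    -- θ'' ≤ L * u on Icc x₁ 1
    have hθ''le : ∀ x ∈ Icc x₁ 1, θ'' x ≤ L * u x := by
      intro x hx
      have hxI : x ∈ Icc (0:ℝ) 1 := hsub hx
      have h1 : 0 < θ x := hθpos x hxI
      have h2 : θ x < M := hθltM x hxI
      have h3 : c ≤ m x := hcge x hx
      have h4 : θ x - c ≤ u x := le_max_left _ _
      have h5 : 0 ≤ u x := hu_nonneg x
      have key : θ x * (θ x - m x) ≤ M * u x := by nlinarith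
      rw [hθ''eq x hxI, hLdef, div_mul_eq_mul_div]
      exact (div_le_div_iff_of_pos_right hμ).mpr key
    -- Step (i): θ' ≤ L * G on Icc x₁ 1
    have hstep1 : ∀ x ∈ Icc x₁ 1, θ' x ≤ L * G x := by
      have hanti : AntitoneOn (fun x => θ' x - L * G x) (Icc x₁ 1) := by
        apply antitoneOn_of_deriv_nonpos (convex_Icc _ _)
        · exact (hθ'c.mono hsub).sub (continuousOn_const.mul hGcont)
        · intro x hx
          rw [interior_Icc] at hx
          exact ((hdθ' x (hsubo hx)).sub
            ((hGd x hx).const_mul L)).differentiableAt.differentiableWithinAt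
        · intro x hx
          rw [interior_Icc] at hx
          rw [((hdθ' x (hsubo hx)).fun_sub ((hGd x hx).const_mul L)).deriv]
          have := hθ''le x (Ioo_subset_Icc_self hx)
          linarith
      intro x hx
      have := hanti hx₁mem1 hx hx.1
      simp only [hθ'x₁, hGx₁, mul_zero, sub_zero] at this
      linarith
    -- G₂ and step (ii)
    set G₂ : ℝ → ℝ := fun x => ∫ t in x₁..x, G t with hG₂def
    have hGint : ∀ a b, a ∈ Icc x₁ 1 → b ∈ Icc x₁ 1 →
        IntervalIntegrable G MeasureTheory.volume a b :=
      fun a b ha hb => (hGcont.mono (uIcc_subset_Icc ha hb)).intervalIntegrable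
    have hG₂cont : ContinuousOn G₂ (Icc x₁ 1) := by
      rw [← uIcc_of_le hx₁1]
      exact intervalIntegral.continuousOn_primitive_interval
        (by rw [uIcc_of_le hx₁1]; exact hGcont.integrableOn_Icc)
    have hG₂d : ∀ x ∈ Ioo x₁ 1, HasDerivAt G₂ (G x) x := by
      intro x hx
      exact intervalIntegral.integral_hasDerivAt_right
        (hGint x₁ x hx₁mem1 (Ioo_subset_Icc_self hx))
        (ContinuousAt.stronglyMeasurableAtFilter isOpen_Ioo
          (fun y hy => hGcont.continuousAt (Icc_mem_nhds hy.1 hy.2)) x hx)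
        (hGcont.continuousAt (Icc_mem_nhds hx.1 hx.2))
    have hG₂x₁ : G₂ x₁ = 0 := intervalIntegral.integral_same
    have hstep2 : ∀ x ∈ Icc x₁ 1, θ x - c ≤ L * G₂ x := by
      have hanti : AntitoneOn (fun x => θ x - c - L * G₂ x) (Icc x₁ 1) := by
        apply antitoneOn_of_deriv_nonpos (convex_Icc _ _)
        · exact ((hθc.mono hsub).sub continuousOn_const).sub (continuousOn_const.mul hG₂cont)
        · intro x hx
          rw [interior_Icc] at hx
          exact (((hdθ x (hsubo hx)).sub_const c).sub
            ((hG₂d x hx).const_mul L)).differentiableAt.differentiableWithinAt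
        · intro x hx
          rw [interior_Icc] at hx
          rw [(((hdθ x (hsubo hx)).sub_const c).fun_sub ((hG₂d x hx).const_mul L)).deriv]
          have := hstep1 x (Ioo_subset_Icc_self hx)
          linarith
      intro x hx
      have := hanti hx₁mem1 hx hx.1
      simp only [hG₂x₁, mul_zero, sub_zero] at this
      linarith
    -- G₂ ≤ G
    have hG₂leG : ∀ x ∈ Icc x₁ 1, G₂ x ≤ G x := by
      intro x hx
      have h1 : G₂ x ≤ (x - x₁) * G x := by
        have := intervalIntegral.integral_mono_on hx.1
          (hGint x₁ x hx₁mem1 hx) intervalIntegrable_const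
          (fun t ht => hGmono (Icc_subset_Icc le_rfl hx.2 ht) hx ht.2)
        rw [intervalIntegral.integral_const, smul_eq_mul] at this
        exact this
      have h2 : 0 ≤ G x := hGnonneg x hx
      nlinarith [hx.2, hx.1, hx₁I.1]
    -- u ≤ L * G
    have hule : ∀ x ∈ Icc x₁ 1, u x ≤ L * G x := by
      intro x hx
      apply max_le
      · exact le_trans (hstep2 x hx) (mul_le_mul_of_nonneg_left (hG₂leG x hx) hL)
      · exact mul_nonneg hL (hGnonneg x hx)
    -- step (iii): G ≡ 0
    have hGzero : ∀ x ∈ Icc x₁ 1, G x = 0 := by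
      have hanti : AntitoneOn (fun x => G x * Real.exp (-(L * x))) (Icc x₁ 1) := by
        apply antitoneOn_of_deriv_nonpos (convex_Icc _ _)
        · exact hGcont.mul
            (Real.continuous_exp.comp (continuous_const.mul continuous_id).neg).continuousOn
        · intro x hx
          rw [interior_Icc] at hx
          have hexp : HasDerivAt (fun y => Real.exp (-(L * y))) (Real.exp (-(L * x)) * -L) x := by
            have h1 : HasDerivAt (fun y => -(L * y)) (-L) x := by
              simpa using ((hasDerivAt_id x).const_mul L).fun_neg
            exact h1.exp
          exact ((hGd x hx).mul hexp).differentiableAt.differentiableWithinAt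
        · intro x hx
          rw [interior_Icc] at hx
          have hexp : HasDerivAt (fun y => Real.exp (-(L * y))) (Real.exp (-(L * x)) * -L) x := by
            have h1 : HasDerivAt (fun y => -(L * y)) (-L) x := by
              simpa using ((hasDerivAt_id x).const_mul L).fun_neg
            exact h1.exp
          rw [((hGd x hx).fun_mul hexp).deriv]
          have h1 := hule x (Ioo_subset_Icc_self hx)
          have h2 := Real.exp_pos (-(L * x))
          nlinarith
      intro x hx
      have h1 := hanti hx₁mem1 hx hx.1
      simp only [hGx₁, zero_mul] at h1
      have h2 := Real.exp_pos (-(L * x))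
      have h3 := hGnonneg x hx
      nlinarith
    intro x hx
    have h1 := hstep2 x hx
    have h4 : G₂ x ≤ 0 := le_trans (hG₂leG x hx) (le_of_eq (hGzero x hx))
    nlinarith
  -- final contradiction
  have hθlem : ∀ x ∈ Icc x₁ 1, θ x ≤ m x := fun x hx =>
    le_trans (hθlec x hx) (hcge x hx)
  have hθ''np : ∀ x ∈ Ioo x₁ 1, θ'' x ≤ 0 := by
    intro x hx
    rw [hθ''eq x (hsub (Ioo_subset_Icc_self hx))]
    apply div_nonpos_of_nonpos_of_nonneg _ hμ.le
    exact mul_nonpos_of_nonneg_of_nonpos (hθpos x (hsub (Ioo_subset_Icc_self hx))).le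
      (by linarith [hθlem x (Ioo_subset_Icc_self hx)])
  have hantiθ' : AntitoneOn θ' (Icc x₁ 1) := by
    apply antitoneOn_of_deriv_nonpos (convex_Icc _ _) (hθ'c.mono hsub)
    · intro x hx
      rw [interior_Icc] at hx
      exact (hdθ' x (hsubo hx)).differentiableAt.differentiableWithinAt
    · intro x hx
      rw [interior_Icc] at hx
      rw [(hdθ' x (hsubo hx)).deriv]
      exact hθ''np x hx
  have hθ'zero : ∀ x ∈ Icc x₁ 1, θ' x = 0 := by
    intro x hx
    have h1 : θ' x ≤ θ' x₁ := hantiθ' hx₁mem1 hx hx.1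
    have h2 : θ' 1 ≤ θ' x := hantiθ' hx ⟨hx₁1, le_rfl⟩ hx.2
    rw [hθ'x₁] at h1; rw [hbc1] at h2
    linarith
  have hmθ : ∀ x ∈ Ioo x₁ 1, m x = θ x := by
    intro x hx
    have hxI : x ∈ Icc (0:ℝ) 1 := hsub (Ioo_subset_Icc_self hx)
    have hd0 : HasDerivAt θ' 0 x := by
      apply (hasDerivAt_const x (0:ℝ)).congr_of_eventuallyEq
      filter_upwards [Icc_mem_nhds hx.1 hx.2] with y hy
      exact hθ'zero y hy
    have hz0 : θ'' x = 0 := (hdθ' x (hsubo hx)).unique hd0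
    have hodex := hodeIcc x hxI
    rw [hz0] at hodex
    have hposx := hθpos x hxI
    have : θ x * (m x - θ x) = 0 := by linarith
    rcases mul_eq_zero.mp this with h | h
    · linarith
    · linarith
  have hneB1 : (nhdsWithin 1 (Ioo x₁ 1)).NeBot := by
    apply mem_closure_iff_nhdsWithin_neBot.mp
    rw [closure_Ioo (ne_of_lt hx₁Ioo.2)]
    exact ⟨hx₁1, le_rfl⟩
  have htm : Filter.Tendsto m (nhdsWithin 1 (Ioo x₁ 1)) (nhds (m 1)) :=
    (hm 1 h1I).mono (fun y hy => hsub (Ioo_subset_Icc_self hy))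
  have htθ : Filter.Tendsto θ (nhdsWithin 1 (Ioo x₁ 1)) (nhds (θ 1)) :=
    (hθc 1 h1I).mono (fun y hy => hsub (Ioo_subset_Icc_self hy))
  have htm' : Filter.Tendsto θ (nhdsWithin 1 (Ioo x₁ 1)) (nhds (m 1)) := by
    apply htm.congr'
    filter_upwards [eventually_mem_nhdsWithin] with y hy
    exact hmθ y hy
  have hm1 : m 1 = θ 1 := tendsto_nhds_unique htm' htθ
  have hfin := hθltM 1 h1I
  rw [hMeq, hm1] at hfin
  exact lt_irrefl _ hfin
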